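/- arXiv:1409.1520 — 2 statements merged into one kernel-verified Lean document; each statement's English description precedes it below -/
import Mathlib

section
/- Let 1 < p < N, q > p−1, let Ω be a bounded domain of ℝ^N with diameter D, let ω be a nonnegative bounded Borel measure on Ω, and let K > 0, b ≥ 0, M > 0, λ > 0. Set β_p = max(1, 3^{(2−p)/(p−1)}). Assume the pointwise inequality W_{1,p}^{2D}[ (W_{1,p}^{2D}[ω])^q · dx ] ≤ M λ^{(q−p+1)/(p−1)²} W_{1,p}^{2D}[ω] < ∞ a.e. in Ω, where (W_{1,p}^{2D}[ω])^q·dx is the measure with density (W_{1,p}^{2D}[ω])^q with respect to Lebesgue measure on Ω. Let {u_m}_{m≥1} be a sequence of nonnegative measurable functions on Ω such that u₁ ≤ K·W_{1,p}^{2D}[ω] + b a.e. in Ω and u_{m+1} ≤ K·W_{1,p}^{2D}[ u_m^q·dx + ω ] + b a.e. in Ω for every m ≥ 1. Then there exist λ₀ > 0 and b₀ > 0, depending only on N, p, q, K, D, M, such that if λ ≤ λ₀ and b ≤ b₀, then u_m ≤ 2 β_p K · W_{1,p}^{2D}[ω] + 2b a.e. in Ω for every m ≥ 1. -/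
open MeasureTheory Metric Set
open scoped ENNReal

/-- Truncated Wolff potential `W_{1,p}^R[ω](x) = ∫_0^R (r^{p-N} ω(B(x,r)))^{1/(p-1)} dr/r`. -/
noncomputable def wolffPotential (N : ℕ) (p R : ℝ)
    (ω : Measure (EuclideanSpace ℝ (Fin N))) (x : EuclideanSpace ℝ (Fin N)) : ℝ≥0∞ :=
  ∫⁻ r in Ioo (0:ℝ) R,
    (ENNReal.ofReal (r ^ (p - (N:ℝ))) * ω (ball x r)) ^ (1/(p-1)) / ENNReal.ofReal r

/-- Maximal fractional operator
`M_{p,R}^η[ω](x) = sup_{0<r<R} ω(B(x,r)) / (r^{N-p} h_η(r))`,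
where `h_η(r) = min((−ln r)^{−η}, (ln 2)^{−η})`. -/
noncomputable def maxFracOp (N : ℕ) (p R η : ℝ)
    (ω : Measure (EuclideanSpace ℝ (Fin N))) (x : EuclideanSpace ℝ (Fin N)) : ℝ≥0∞ :=
  ⨆ r ∈ Ioo (0:ℝ) R,
    ω (ball x r) /
      ENNReal.ofReal (r ^ ((N:ℝ) - p) * min ((-Real.log r) ^ (-η)) ((Real.log 2) ^ (-η)))

section aux

variable {N : ℕ} {p R : ℝ}

private lemma wolff_meas_integrand (μ : Measure (EuclideanSpace ℝ (Fin N)))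
    (x : EuclideanSpace ℝ (Fin N)) :
    Measurable fun r : ℝ =>
      (ENNReal.ofReal (r ^ (p - (N:ℝ))) * μ (ball x r)) ^ (1/(p-1)) / ENNReal.ofReal r := by
  have hmono : Monotone fun r : ℝ => μ (ball x r) :=
    fun r s hrs => measure_mono (ball_subset_ball hrs)
  have h1 : Measurable fun r : ℝ => ENNReal.ofReal (r ^ (p - (N:ℝ))) :=
    ENNReal.measurable_ofReal.comp (measurable_id.pow_const _)
  exact ((h1.mul hmono.measurable).pow_const _).div
    (ENNReal.measurable_ofReal.comp measurable_id)

private lemma wolff_mono (hγ : 0 ≤ 1/(p-1)) {μ ν : Measure (EuclideanSpace ℝ (Fin N))}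
    (h : μ ≤ ν) (x : EuclideanSpace ℝ (Fin N)) :
    wolffPotential N p R μ x ≤ wolffPotential N p R ν x := by
  refine lintegral_mono fun r => ?_
  exact ENNReal.div_le_div_right
    (ENNReal.rpow_le_rpow (mul_le_mul_right (Measure.le_iff'.1 h _) _) hγ) _

private lemma wolff_smul_le (hγ : 0 ≤ 1/(p-1)) (c : ℝ≥0∞) (hc : c ≠ ⊤)
    (μ : Measure (EuclideanSpace ℝ (Fin N))) (x : EuclideanSpace ℝ (Fin N)) :
    wolffPotential N p R (c • μ) x ≤ c ^ (1/(p-1)) * wolffPotential N p R μ x := by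
  unfold wolffPotential
  rw [← lintegral_const_mul' _ _ (ENNReal.rpow_ne_top_of_nonneg hγ hc)]
  refine lintegral_mono fun r => le_of_eq ?_
  rw [Measure.smul_apply, smul_eq_mul, mul_left_comm, ENNReal.mul_rpow_of_nonneg _ _ hγ,
    mul_div_assoc]

private lemma ennreal_two_rpow {γ : ℝ} (hγ : 0 ≤ γ) (a b : ℝ≥0∞) :
    (a + b) ^ γ ≤ (2*a) ^ γ + (2*b) ^ γ := by
  have hmono : Monotone fun x : ℝ≥0∞ => (2*x)^γ :=
    fun u v huv => ENNReal.rpow_le_rpow (mul_le_mul_right huv 2) hγ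
  calc (a+b)^γ ≤ (2 * max a b)^γ := by
        refine ENNReal.rpow_le_rpow ?_ hγ
        rcases le_total a b with h | h
        · rw [max_eq_right h, two_mul]; exact add_le_add_left h _
        · rw [max_eq_left h, two_mul]; exact add_le_add_right h _
    _ = max ((2*a)^γ) ((2*b)^γ) := hmono.map_max
    _ ≤ _ := max_le le_self_add le_add_self

private lemma ennreal_add3_rpow {γ : ℝ} (hγ : 0 < γ) (a b c : ℝ≥0∞) :
    (a + b + c) ^ γ ≤ ENNReal.ofReal (max 1 (3 ^ (γ - 1))) * (a ^ γ + b ^ γ + c ^ γ) := by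
  have hofR : (1:ℝ≥0∞) ≤ ENNReal.ofReal (max 1 (3 ^ (γ - 1))) := by
    rw [ENNReal.one_le_ofReal]; exact le_max_left _ _
  rcases le_total γ 1 with h1 | h1
  · calc (a+b+c)^γ ≤ (a+b)^γ + c^γ := ENNReal.rpow_add_le_add_rpow _ _ hγ.le h1
      _ ≤ a^γ + b^γ + c^γ := by
          exact add_le_add_left (ENNReal.rpow_add_le_add_rpow _ _ hγ.le h1) _
      _ ≤ _ := le_mul_of_one_le_left zero_le hofR
  · have h3 : (3:ℝ≥0∞) ≠ 0 := by norm_num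
    have h3t : (3:ℝ≥0∞) ≠ ⊤ := by norm_num
    have hsum : (1/3 : ℝ≥0∞) + 1/3 + 1/3 = 1 := by
      rw [ENNReal.div_add_div_same, ENNReal.div_add_div_same]
      norm_num
      exact ENNReal.div_self h3 h3t
    have h := ENNReal.rpow_arith_mean_le_arith_mean_rpow (Finset.univ (α := Fin 3))
      ![1/3, 1/3, 1/3] ![3*a, 3*b, 3*c] (by simpa [Fin.sum_univ_three] using hsum) h1
    simp only [Fin.sum_univ_three, Matrix.cons_val_zero, Matrix.cons_val_one, Matrix.head_cons,
      Matrix.cons_val_two, Matrix.tail_cons] at h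
    have hcan : ∀ x : ℝ≥0∞, (1/3 : ℝ≥0∞) * (3*x) = x := by
      intro x
      rw [one_div, ← mul_assoc, ENNReal.inv_mul_cancel h3 h3t, one_mul]
    rw [hcan a, hcan b, hcan c] at h
    have hkey : ∀ x : ℝ≥0∞, (1/3 : ℝ≥0∞) * (3*x)^γ = (3:ℝ≥0∞)^(γ-1) * x^γ := by
      intro x
      rw [ENNReal.mul_rpow_of_nonneg _ _ hγ.le, sub_eq_add_neg,
        ENNReal.rpow_add _ _ h3 h3t, ENNReal.rpow_neg_one, one_div, ← mul_assoc,
        mul_comm ((3:ℝ≥0∞)⁻¹), mul_assoc, ← mul_assoc]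
    rw [hkey a, hkey b, hkey c] at h
    calc (a+b+c)^γ ≤ (3:ℝ≥0∞)^(γ-1)*a^γ + (3:ℝ≥0∞)^(γ-1)*b^γ + (3:ℝ≥0∞)^(γ-1)*c^γ := h
      _ = (3:ℝ≥0∞)^(γ-1) * (a^γ + b^γ + c^γ) := by ring
      _ ≤ _ := by
          refine mul_le_mul_left ?_ _
          have h33 : ENNReal.ofReal ((3:ℝ)^(γ-1)) = ((3:ℝ≥0∞))^(γ-1) := by
            rw [← ENNReal.ofReal_rpow_of_pos (by norm_num : (0:ℝ) < 3)]
            norm_num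
          rw [← h33]
          exact ENNReal.ofReal_le_ofReal (le_max_right _ _)


private lemma wolff_add3 (hγ : 0 < 1/(p-1))
    (μ₁ μ₂ μ₃ : Measure (EuclideanSpace ℝ (Fin N))) (x : EuclideanSpace ℝ (Fin N)) :
    wolffPotential N p R (μ₁ + μ₂ + μ₃) x ≤
      ENNReal.ofReal (max 1 (3 ^ ((2-p)/(p-1)))) *
        (wolffPotential N p R μ₁ x + wolffPotential N p R μ₂ x + wolffPotential N p R μ₃ x) := by
  have hβeq : (2-p)/(p-1) = 1/(p-1) - 1 := by
    have hp1 : p - 1 ≠ 0 := by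
      intro h
      rw [h] at hγ
      simp at hγ
    field_simp
    ring
  set f₁ := fun r : ℝ =>
    (ENNReal.ofReal (r ^ (p - (N:ℝ))) * μ₁ (ball x r)) ^ (1/(p-1)) / ENNReal.ofReal r with hf₁
  set f₂ := fun r : ℝ =>
    (ENNReal.ofReal (r ^ (p - (N:ℝ))) * μ₂ (ball x r)) ^ (1/(p-1)) / ENNReal.ofReal r with hf₂
  set f₃ := fun r : ℝ =>
    (ENNReal.ofReal (r ^ (p - (N:ℝ))) * μ₃ (ball x r)) ^ (1/(p-1)) / ENNReal.ofReal r with hf₃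
  have hmeas₁ := wolff_meas_integrand (p := p) μ₁ x
  have hmeas₂ := wolff_meas_integrand (p := p) μ₂ x
  calc wolffPotential N p R (μ₁ + μ₂ + μ₃) x
      ≤ ∫⁻ r in Ioo (0:ℝ) R,
          ENNReal.ofReal (max 1 (3 ^ ((2-p)/(p-1)))) * (f₁ r + f₂ r + f₃ r) := by
        refine lintegral_mono fun r => ?_
        rw [Measure.add_apply, Measure.add_apply, mul_add, mul_add]
        rw [hβeq]
        refine le_trans (ENNReal.div_le_div_right (ennreal_add3_rpow hγ _ _ _) _) ?_
        rw [mul_div_assoc, ENNReal.add_div, ENNReal.add_div]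
    _ = ENNReal.ofReal (max 1 (3 ^ ((2-p)/(p-1)))) *
          ∫⁻ r in Ioo (0:ℝ) R, (f₁ r + f₂ r + f₃ r) :=
        lintegral_const_mul' _ _ ENNReal.ofReal_ne_top
    _ = _ := by
        rw [lintegral_add_right _ (wolff_meas_integrand (p := p) μ₃ x),
          lintegral_add_right _ (wolff_meas_integrand (p := p) μ₂ x)]
        rfl

private lemma wolff_lebesgue (hp : 1 < p)
    (Ω : Set (EuclideanSpace ℝ (Fin N))) (x : EuclideanSpace ℝ (Fin N)) :
    wolffPotential N p R (volume.restrict Ω) x ≤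
      ENNReal.ofReal
        ((volume (ball (0:EuclideanSpace ℝ (Fin N)) 1)).toReal ^ (1/(p-1)) *
          (max R 1) ^ (1/(p-1)) * max R 1) := by
  have hp1 : (0:ℝ) < p - 1 := by linarith
  have hγ : (0:ℝ) < 1/(p-1) := by positivity
  set κ := volume (ball (0:EuclideanSpace ℝ (Fin N)) 1) with hκ
  have hκtop : κ ≠ ⊤ := measure_ball_lt_top.ne
  have hDm : (0:ℝ) < max R 1 := lt_of_lt_of_le one_pos (le_max_right _ _)
  have key : ∀ r ∈ Ioo (0:ℝ) R,
      (ENNReal.ofReal (r ^ (p - (N:ℝ))) * (volume.restrict Ω) (ball x r)) ^ (1/(p-1)) /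
          ENNReal.ofReal r
        ≤ ENNReal.ofReal (κ.toReal ^ (1/(p-1)) * (max R 1) ^ (1/(p-1))) := by
    intro r hr
    have hr0 : 0 < r := hr.1
    have hrDm : r ≤ max R 1 := le_max_of_le_left hr.2.le
    have hball : ENNReal.ofReal (r ^ (p - (N:ℝ))) * (volume.restrict Ω) (ball x r)
        ≤ ENNReal.ofReal (r ^ p) * κ := by
      refine le_trans (mul_le_mul_right (Measure.restrict_apply_le _ _) _) (le_of_eq ?_)
      rw [Measure.addHaar_ball_of_pos volume x hr0, finrank_euclideanSpace_fin, ← mul_assoc,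
        ← ENNReal.ofReal_mul (Real.rpow_nonneg hr0.le _)]
      congr 2
      rw [← Real.rpow_natCast r N, ← Real.rpow_add hr0]
      ring_nf
    calc (ENNReal.ofReal (r ^ (p - (N:ℝ))) * (volume.restrict Ω) (ball x r)) ^ (1/(p-1)) /
          ENNReal.ofReal r
        ≤ (ENNReal.ofReal (r ^ p) * κ) ^ (1/(p-1)) / ENNReal.ofReal r :=
          ENNReal.div_le_div_right (ENNReal.rpow_le_rpow hball hγ.le) _
      _ = κ ^ (1/(p-1)) * (ENNReal.ofReal ((r ^ p) ^ (1/(p-1))) / ENNReal.ofReal r) := by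
          rw [ENNReal.mul_rpow_of_nonneg _ _ hγ.le,
            ENNReal.ofReal_rpow_of_pos (Real.rpow_pos_of_pos hr0 p),
            mul_comm (ENNReal.ofReal ((r^p)^(1/(p-1)))), mul_div_assoc]
      _ = κ ^ (1/(p-1)) * ENNReal.ofReal ((r ^ p) ^ (1/(p-1)) / r) := by
          rw [ENNReal.ofReal_div_of_pos hr0]
      _ ≤ κ ^ (1/(p-1)) * ENNReal.ofReal ((max R 1) ^ (1/(p-1))) := by
          refine mul_le_mul_right (ENNReal.ofReal_le_ofReal ?_) _
          have h1 : (r ^ p) ^ (1/(p-1)) / r = r ^ (p * (1/(p-1)) - 1) := by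
            rw [← Real.rpow_mul hr0.le, Real.rpow_sub hr0, Real.rpow_one]
          have h2 : p * (1/(p-1)) - 1 = 1/(p-1) := by
            field_simp
            ring
          rw [h1, h2]
          exact Real.rpow_le_rpow hr0.le hrDm hγ.le
      _ = ENNReal.ofReal (κ.toReal ^ (1/(p-1)) * (max R 1) ^ (1/(p-1))) := by
          rw [ENNReal.ofReal_mul (Real.rpow_nonneg ENNReal.toReal_nonneg _)]
          congr 1
          rw [← ENNReal.ofReal_rpow_of_nonneg ENNReal.toReal_nonneg hγ.le,
            ENNReal.ofReal_toReal hκtop]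
  unfold wolffPotential
  calc (∫⁻ r in Ioo (0:ℝ) R,
        (ENNReal.ofReal (r ^ (p - (N:ℝ))) * (volume.restrict Ω) (ball x r)) ^ (1/(p-1)) /
          ENNReal.ofReal r)
      ≤ ∫⁻ _ in Ioo (0:ℝ) R,
          ENNReal.ofReal (κ.toReal ^ (1/(p-1)) * (max R 1) ^ (1/(p-1))) :=
        lintegral_mono_ae ((ae_restrict_iff' measurableSet_Ioo).2 (ae_of_all _ key))
    _ = ENNReal.ofReal (κ.toReal ^ (1/(p-1)) * (max R 1) ^ (1/(p-1))) * volume (Ioo (0:ℝ) R) :=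
        setLIntegral_const _ _
    _ ≤ ENNReal.ofReal (κ.toReal ^ (1/(p-1)) * (max R 1) ^ (1/(p-1))) *
          ENNReal.ofReal (max R 1) := by
        rw [Real.volume_Ioo]
        refine mul_le_mul_right (ENNReal.ofReal_le_ofReal ?_) _
        rw [sub_zero]
        exact le_max_left _ _
    _ = _ := by
        rw [← ENNReal.ofReal_mul
          (mul_nonneg (Real.rpow_nonneg ENNReal.toReal_nonneg _) (Real.rpow_nonneg hDm.le _))]

end aux

set_option maxHeartbeats 2000000 in
/-- the iteration lemma with power nonlinearity. Let `1 < p < N`, `q > p−1`,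
`β_p = max(1, 3^{(2−p)/(p−1)})`. There exist `λ₀, b₀ > 0` depending only on
`N, p, q, K, D, M` such that, for every bounded domain `Ω` of diameter `D`, every finite
nonnegative measure `ω` supported in `Ω`, every `λ > 0`, `b ≥ 0` satisfying the pointwise
inequality `W_{1,p}^{2D}[(W_{1,p}^{2D}[ω])^q dx] ≤ M λ^{(q−p+1)/(p−1)²} W_{1,p}^{2D}[ω] < ∞`
a.e. in `Ω`, and every sequence `u_m` of nonnegative functions on `Ω` with
`u₁ ≤ K W_{1,p}^{2D}[ω] + b` and `u_{m+1} ≤ K W_{1,p}^{2D}[u_m^q dx + ω] + b` a.e. in `Ω`,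
if `λ ≤ λ₀` and `b ≤ b₀`, then `u_m ≤ 2 β_p K W_{1,p}^{2D}[ω] + 2b` a.e. in `Ω` for all
`m ≥ 1`. -/
theorem power_source_iteration (N : ℕ) (p q K M D : ℝ)
    (hp : 1 < p) (hpN : p < N) (hq : p - 1 < q) (hK : 0 < K) (hM : 0 < M) :
    ∃ lam₀ : ℝ, 0 < lam₀ ∧ ∃ b₀ : ℝ, 0 < b₀ ∧
      ∀ Ω : Set (EuclideanSpace ℝ (Fin N)),
        IsOpen Ω → IsConnected Ω → Bornology.IsBounded Ω → Metric.diam Ω = D →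
        ∀ ω : Measure (EuclideanSpace ℝ (Fin N)), IsFiniteMeasure ω → ω Ωᶜ = 0 →
          ∀ lam b : ℝ, 0 < lam → 0 ≤ b →
          (∀ᵐ x ∂(volume.restrict Ω),
            wolffPotential N p (2 * D)
                ((volume.restrict Ω).withDensity
                  (fun y => wolffPotential N p (2 * D) ω y ^ q)) x
              ≤ ENNReal.ofReal (M * lam ^ ((q - p + 1) / (p - 1) ^ 2)) *
                  wolffPotential N p (2 * D) ω x
            ∧ wolffPotential N p (2 * D) ω x < ⊤) →
          ∀ u : ℕ → EuclideanSpace ℝ (Fin N) → ℝ,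
            (∀ m : ℕ, 1 ≤ m → ∀ᵐ x ∂(volume.restrict Ω), 0 ≤ u m x) →
            (∀ᵐ x ∂(volume.restrict Ω),
              ENNReal.ofReal (u 1 x) ≤
                ENNReal.ofReal K * wolffPotential N p (2 * D) ω x + ENNReal.ofReal b) →
            (∀ m : ℕ, 1 ≤ m → ∀ᵐ x ∂(volume.restrict Ω),
              ENNReal.ofReal (u (m + 1) x) ≤
                ENNReal.ofReal K *
                  wolffPotential N p (2 * D)
                    ((volume.restrict Ω).withDensity
                        (fun y => ENNReal.ofReal (u m y ^ q)) + ω) x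
                  + ENNReal.ofReal b) →
            lam ≤ lam₀ → b ≤ b₀ →
            ∀ m : ℕ, 1 ≤ m → ∀ᵐ x ∂(volume.restrict Ω),
              ENNReal.ofReal (u m x) ≤
                ENNReal.ofReal (2 * max 1 (3 ^ ((2 - p) / (p - 1))) * K) *
                  wolffPotential N p (2 * D) ω x + ENNReal.ofReal (2 * b) := by
  have hp1 : (0:ℝ) < p - 1 := by linarith
  have hγ : (0:ℝ) < 1/(p-1) := by positivity
  have hq0 : (0:ℝ) ≤ q := by nlinarith
  set β := max 1 ((3:ℝ) ^ ((2 - p) / (p - 1))) with hβdef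
  have hβ1 : (1:ℝ) ≤ β := le_max_left _ _
  have hβ0 : (0:ℝ) < β := lt_of_lt_of_le one_pos hβ1
  have hqγ : (1:ℝ) < q * (1/(p-1)) := by
    rw [mul_one_div, lt_div_iff₀ hp1, one_mul]
    exact hq
  have he : (0:ℝ) < (q - p + 1)/(p-1)^2 := by
    have : (0:ℝ) < q - p + 1 := by linarith
    positivity
  set e := (q - p + 1)/(p-1)^2 with hedef
  set κr := (volume (ball (0:EuclideanSpace ℝ (Fin N)) 1)).toReal with hκrdef
  have hκr0 : 0 < κr :=
    ENNReal.toReal_pos (measure_ball_pos _ _ one_pos).ne' measure_ball_lt_top.ne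
  set Dm := max (2*D) 1 with hDmdef
  have hDm1 : (1:ℝ) ≤ Dm := le_max_right _ _
  have hDm0 : (0:ℝ) < Dm := lt_of_lt_of_le one_pos hDm1
  set Cr := κr ^ (1/(p-1)) * Dm ^ (1/(p-1)) * Dm with hCrdef
  have hCr0 : 0 < Cr := by positivity
  set X₁ := (4*β*K) ^ (q * (1/(p-1))) with hX₁def
  have hX₁0 : 0 < X₁ := Real.rpow_pos_of_pos (by positivity) _
  have hT0 : 0 < X₁ * M := mul_pos hX₁0 hM
  refine ⟨(X₁ * M) ^ (-(1/e)), Real.rpow_pos_of_pos hT0 _, ?_⟩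
  set s := q * (1/(p-1)) - 1 with hsdef
  have hs0 : (0:ℝ) < s := by simp only [hsdef]; linarith
  set T₂ := K * β * (4 ^ (q * (1/(p-1)))) * Cr with hT₂def
  have hT₂0 : 0 < T₂ := by
    have h4 : (0:ℝ) < 4 ^ (q * (1/(p-1))) := Real.rpow_pos_of_pos (by norm_num) _
    positivity
  refine ⟨min 1 (T₂ ^ (-(1/s))), lt_min one_pos (Real.rpow_pos_of_pos hT₂0 _), ?_⟩
  intro Ω hΩo hΩc hΩb hΩd ω hωf hωc lam b hlam hb hw u hupos hu1 hustep hlamle hble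
  -- two key real inequalities
  have hlam_e : X₁ * M * lam ^ e ≤ 1 := by
    have h1 : lam ^ e ≤ ((X₁ * M) ^ (-(1/e))) ^ e := Real.rpow_le_rpow hlam.le hlamle he.le
    have h2 : ((X₁ * M) ^ (-(1/e))) ^ e = (X₁ * M)⁻¹ := by
      rw [← Real.rpow_mul hT0.le]
      have : -(1/e) * e = -1 := by field_simp
      rw [this, Real.rpow_neg_one]
    calc X₁ * M * lam ^ e ≤ X₁ * M * (X₁ * M)⁻¹ := by
          refine mul_le_mul_of_nonneg_left ?_ hT0.le
          rw [← h2]; exact h1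
      _ = 1 := mul_inv_cancel₀ hT0.ne'
  have hb2 : K * β * ((4*b) ^ (q*(1/(p-1)))) * Cr ≤ b := by
    rcases hb.eq_or_lt with hb0 | hb0
    · rw [← hb0]
      rw [mul_zero, Real.zero_rpow (by linarith : q * (1/(p-1)) ≠ 0)]
      simp
    · have hble' : b ≤ T₂ ^ (-(1/s)) := le_trans hble (min_le_right _ _)
      have h1 : b ^ s ≤ T₂⁻¹ := by
        calc b ^ s ≤ (T₂ ^ (-(1/s))) ^ s := Real.rpow_le_rpow hb hble' hs0.le
          _ = T₂⁻¹ := by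
            rw [← Real.rpow_mul hT₂0.le]
            have : -(1/s) * s = -1 := by field_simp
            rw [this, Real.rpow_neg_one]
      have hbq : (4*b) ^ (q*(1/(p-1))) = 4 ^ (q*(1/(p-1))) * (b ^ s * b) := by
        rw [Real.mul_rpow (by norm_num) hb]
        congr 1
        have hqs : q * (1/(p-1)) = s + 1 := by simp [hsdef]
        rw [hqs, Real.rpow_add hb0, Real.rpow_one]
      calc K * β * ((4*b) ^ (q*(1/(p-1)))) * Cr = T₂ * b ^ s * b := by
            rw [hbq, hT₂def]; ring
        _ ≤ T₂ * T₂⁻¹ * b := by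
            refine mul_le_mul_of_nonneg_right (mul_le_mul_of_nonneg_left h1 hT₂0.le) hb
        _ = b := by rw [mul_inv_cancel₀ hT₂0.ne', one_mul]
  intro m hm
  induction m with
  | zero => exact absurd hm (by norm_num)
  | succ n ih =>
    rcases Nat.eq_zero_or_pos n with rfl | hn
    · filter_upwards [hu1] with x hx
      refine le_trans hx (add_le_add ?_ ?_)
      · exact mul_le_mul_left (ENNReal.ofReal_le_ofReal (by nlinarith)) _
      · exact ENNReal.ofReal_le_ofReal (by linarith)
    · have ihn := ih hn
      set W := wolffPotential N p (2*D) ω with hWdef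
      set c₁ := ENNReal.ofReal ((4*β*K)^q) with hc₁def
      set c₂ := ENNReal.ofReal ((4*b)^q) with hc₂def
      set ν₁ := (volume.restrict Ω).withDensity (fun y => W y ^ q) with hν₁def
      -- pointwise density bound
      have hgb : (fun y => ENNReal.ofReal (u n y ^ q)) ≤ᵐ[volume.restrict Ω]
          (fun y => c₁ * W y ^ q + c₂) := by
        filter_upwards [ihn, hupos n hn] with y hy hy0
        have e1 : ENNReal.ofReal (u n y ^ q) = ENNReal.ofReal (u n y) ^ q := by
          rw [ENNReal.ofReal_rpow_of_nonneg hy0 hq0]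
        rw [e1]
        have e2 : (2:ℝ≥0∞) * ENNReal.ofReal (2*β*K) = ENNReal.ofReal (4*β*K) := by
          rw [show ((2:ℝ≥0∞)) = ENNReal.ofReal 2 by norm_num,
            ← ENNReal.ofReal_mul (by norm_num)]
          congr 1; ring
        have e3 : (2:ℝ≥0∞) * ENNReal.ofReal (2*b) = ENNReal.ofReal (4*b) := by
          rw [show ((2:ℝ≥0∞)) = ENNReal.ofReal 2 by norm_num,
            ← ENNReal.ofReal_mul (by norm_num)]
          congr 1; ring
        calc ENNReal.ofReal (u n y) ^ q
            ≤ (ENNReal.ofReal (2*β*K) * W y + ENNReal.ofReal (2*b)) ^ q :=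
              ENNReal.rpow_le_rpow hy hq0
          _ ≤ (2 * (ENNReal.ofReal (2*β*K) * W y)) ^ q + (2 * ENNReal.ofReal (2*b)) ^ q :=
              ennreal_two_rpow hq0 _ _
          _ = c₁ * W y ^ q + c₂ := by
              rw [← mul_assoc, e2, e3, ENNReal.mul_rpow_of_nonneg _ _ hq0,
                hc₁def, hc₂def, ENNReal.ofReal_rpow_of_pos (by positivity),
                ENNReal.ofReal_rpow_of_nonneg (by linarith) hq0]
      -- measure domination
      have hmle : (volume.restrict Ω).withDensity (fun y => ENNReal.ofReal (u n y ^ q)) + ω ≤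
          c₁ • ν₁ + c₂ • (volume.restrict Ω) + ω := by
        refine add_le_add_left ?_ ω
        refine le_trans (withDensity_mono hgb) ?_
        refine Measure.le_iff.2 fun t ht => ?_
        rw [withDensity_apply _ ht, Measure.add_apply, Measure.smul_apply, Measure.smul_apply,
          smul_eq_mul, smul_eq_mul, hν₁def, withDensity_apply _ ht,
          lintegral_add_right _ measurable_const, lintegral_const_mul' _ _ ENNReal.ofReal_ne_top,
          lintegral_const, Measure.restrict_apply_univ]
      -- Wolff potential bound
      have hWtot : ∀ x, wolffPotential N p (2*D)
          ((volume.restrict Ω).withDensity (fun y => ENNReal.ofReal (u n y ^ q)) + ω) x ≤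
          ENNReal.ofReal β * (ENNReal.ofReal X₁ * wolffPotential N p (2*D) ν₁ x
            + ENNReal.ofReal ((4*b)^(q*(1/(p-1)))) * ENNReal.ofReal Cr + W x) := by
        intro x
        refine le_trans (wolff_mono hγ.le hmle x) ?_
        refine le_trans (wolff_add3 hγ _ _ _ x) ?_
        rw [← hβdef]
        refine mul_le_mul_right (add_le_add (add_le_add ?_ ?_) le_rfl) _
        · refine le_trans (wolff_smul_le hγ.le c₁ ENNReal.ofReal_ne_top ν₁ x) ?_
          refine mul_le_mul_left (le_of_eq ?_) _
          rw [hc₁def, ENNReal.ofReal_rpow_of_nonneg (Real.rpow_nonneg (by nlinarith) q) hγ.le,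
            ← Real.rpow_mul (by nlinarith : (0:ℝ) ≤ 4*β*K)]
        · refine le_trans (wolff_smul_le hγ.le c₂ ENNReal.ofReal_ne_top _ x) ?_
          have hc₂γ : c₂ ^ (1/(p-1)) = ENNReal.ofReal ((4*b)^(q*(1/(p-1)))) := by
            rw [hc₂def, ENNReal.ofReal_rpow_of_nonneg (by positivity) hγ.le,
              ← Real.rpow_mul (by linarith)]
          rw [hc₂γ]
          refine mul_le_mul_right ?_ _
          have := wolff_lebesgue (R := 2*D) hp Ω x
          rw [← hκrdef, ← hDmdef, ← hCrdef] at this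
          exact this
      -- conclusion
      filter_upwards [hustep n hn, hw] with x hx hwx
      refine le_trans hx ?_
      refine le_trans (add_le_add_left (mul_le_mul_right (hWtot x) _) _) ?_
      refine le_trans (add_le_add_left (mul_le_mul_right (mul_le_mul_right
        (add_le_add_left (add_le_add_left (mul_le_mul_right hwx.1 _) _) _) _) _) _) ?_
      have hX₂nn : (0:ℝ) ≤ (4*b)^(q*(1/(p-1))) := Real.rpow_nonneg (by linarith) _
      have hMl : (0:ℝ) ≤ M * lam ^ e := mul_nonneg hM.le (Real.rpow_nonneg hlam.le _)
      have hsplit : ENNReal.ofReal K * (ENNReal.ofReal β *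
            (ENNReal.ofReal X₁ * (ENNReal.ofReal (M * lam ^ e) * W x)
              + ENNReal.ofReal ((4*b)^(q*(1/(p-1)))) * ENNReal.ofReal Cr + W x))
            + ENNReal.ofReal b
          = ENNReal.ofReal (K * (β * (X₁ * (M * lam ^ e))) + K * β) * W x
            + ENNReal.ofReal (K * (β * ((4*b)^(q*(1/(p-1))) * Cr)) + b) := by
        rw [ENNReal.ofReal_add (by positivity) (by positivity),
          ENNReal.ofReal_add (by positivity) hb,
          ENNReal.ofReal_mul hK.le, ENNReal.ofReal_mul hβ0.le, ENNReal.ofReal_mul hX₁0.le,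
          ENNReal.ofReal_mul hK.le, ENNReal.ofReal_mul hK.le, ENNReal.ofReal_mul hβ0.le,
          ENNReal.ofReal_mul hX₂nn]
        ring
      rw [hsplit]
      refine add_le_add (mul_le_mul_left (ENNReal.ofReal_le_ofReal ?_) _)
        (ENNReal.ofReal_le_ofReal ?_)
      · nlinarith [mul_le_mul_of_nonneg_left hlam_e (mul_nonneg hK.le hβ0.le)]
      · nlinarith [hb2]
end

section
/- Let 1 < p < N, let Ω be a bounded domain of ℝ^N with diameter D, let β > 1 and κ > 0. For every ε > 0 there exists a constant c_ε = c_ε(ε, N, p, β, κ, D) > 0 such that for every nonnegative bounded Borel measure ω on Ω and every integer n ≥ 1, one has ( n + κ·W_{1,p}^{2D}[ n·1_Ω dx + ω ](x) )^β ≤ c_ε · n^{βp/(p−1)} + (1 + ε) κ^β ( W_{1,p}^{2D}[ω](x) )^β for a.e. x ∈ Ω, where n·1_Ω dx denotes n times Lebesgue measure restricted to Ω. -/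
open MeasureTheory Metric Set
open scoped ENNReal

/-- Young-type inequality in `ℝ≥0∞`: for any `q > 0`, `δ > 0` there is `C > 0` with
`(a+b)^q ≤ C a^q + (1+δ) b^q`. -/
lemma aux_rpow_split (q δ : ℝ) (hq : 0 < q) (hδ : 0 < δ) :
    ∃ C : ℝ, 0 < C ∧ ∀ a b : ℝ≥0∞,
      (a + b) ^ q ≤ ENNReal.ofReal C * a ^ q + ENNReal.ofReal (1 + δ) * b ^ q := by
  have h1 : 1 < (1 + δ) ^ (1 / q) :=
    (Real.one_lt_rpow_iff_of_pos (by linarith)).mpr (Or.inl ⟨by linarith, by positivity⟩)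
  set δ' : ℝ := (1 + δ) ^ (1 / q) - 1 with hδ'def
  have hδ' : 0 < δ' := by simp only [hδ'def]; linarith
  have hpow : (1 + δ') ^ q = 1 + δ := by
    have h2 : (1 : ℝ) + δ' = (1 + δ) ^ (1 / q) := by simp [hδ'def]
    rw [h2, ← Real.rpow_mul (by linarith), one_div, inv_mul_cancel₀ hq.ne', Real.rpow_one]
  refine ⟨(1 + 1 / δ') ^ q, by positivity, fun a b => ?_⟩
  rcases le_or_gt a (ENNReal.ofReal δ' * b) with h | h
  · calc (a + b) ^ q ≤ (ENNReal.ofReal δ' * b + b) ^ q :=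
          ENNReal.rpow_le_rpow (add_le_add_left h b) hq.le
    _ = (ENNReal.ofReal (1 + δ') * b) ^ q := by
          rw [ENNReal.ofReal_add (by norm_num) hδ'.le, ENNReal.ofReal_one, add_mul, one_mul,
            add_comm]
    _ = ENNReal.ofReal ((1 + δ') ^ q) * b ^ q := by
          rw [ENNReal.mul_rpow_of_nonneg _ _ hq.le, ENNReal.ofReal_rpow_of_pos (by linarith)]
    _ = ENNReal.ofReal (1 + δ) * b ^ q := by rw [hpow]
    _ ≤ _ := le_add_self
  · have hb : b ≤ ENNReal.ofReal (1 / δ') * a := by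
      have h0 : ENNReal.ofReal δ' ≠ 0 := by
        simp [ENNReal.ofReal_eq_zero]; linarith
      rw [one_div, ENNReal.ofReal_inv_of_pos hδ']
      have h' : b * ENNReal.ofReal δ' ≤ a := by rw [mul_comm]; exact h.le
      rw [← ENNReal.le_div_iff_mul_le (Or.inl h0) (Or.inl ENNReal.ofReal_ne_top)] at h'
      rwa [ENNReal.div_eq_inv_mul] at h'
    calc (a + b) ^ q ≤ (a + ENNReal.ofReal (1 / δ') * a) ^ q :=
          ENNReal.rpow_le_rpow (add_le_add_right hb a) hq.le
    _ = (ENNReal.ofReal (1 + 1 / δ') * a) ^ q := by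
          rw [ENNReal.ofReal_add (by norm_num) (by positivity), ENNReal.ofReal_one, add_mul,
            one_mul]
    _ = ENNReal.ofReal ((1 + 1 / δ') ^ q) * a ^ q := by
          rw [ENNReal.mul_rpow_of_nonneg _ _ hq.le, ENNReal.ofReal_rpow_of_pos (by positivity)]
    _ ≤ _ := le_add_right (le_refl _)

/-- Measurability of the Wolff-potential integrand. -/
lemma aux_meas (N : ℕ) (p q : ℝ) (μ : Measure (EuclideanSpace ℝ (Fin N)))
    (x : EuclideanSpace ℝ (Fin N)) :
    Measurable (fun r : ℝ =>
      (ENNReal.ofReal (r ^ (p - (N:ℝ))) * μ (ball x r)) ^ q / ENNReal.ofReal r) := by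
  have h1 : Measurable fun r : ℝ => ENNReal.ofReal (r ^ (p - (N:ℝ))) := by measurability
  have h2 : Measurable fun r : ℝ => μ (ball x r) :=
    Monotone.measurable (fun a b hab => measure_mono (ball_subset_ball hab))
  have h3 : Measurable fun y : ℝ≥0∞ => y ^ q := by measurability
  exact (h3.comp (h1.mul h2)).div (by measurability)

/-- Splitting of the Wolff potential of a sum of measures. -/
lemma wolff_add_le (N : ℕ) (p R q C δ : ℝ) (hq : q = 1/(p-1))
    (μ ν : Measure (EuclideanSpace ℝ (Fin N))) (x : EuclideanSpace ℝ (Fin N))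
    (hsplit : ∀ a b : ℝ≥0∞,
      (a + b) ^ q ≤ ENNReal.ofReal C * a ^ q + ENNReal.ofReal (1 + δ) * b ^ q) :
    wolffPotential N p R (μ + ν) x ≤
      ENNReal.ofReal C * wolffPotential N p R μ x
        + ENNReal.ofReal (1 + δ) * wolffPotential N p R ν x := by
  unfold wolffPotential
  rw [← hq]
  calc (∫⁻ r in Ioo (0:ℝ) R,
        (ENNReal.ofReal (r ^ (p - (N:ℝ))) * (μ + ν) (ball x r)) ^ q / ENNReal.ofReal r)
      ≤ ∫⁻ r in Ioo (0:ℝ) R,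
        (ENNReal.ofReal C * ((ENNReal.ofReal (r ^ (p - (N:ℝ))) * μ (ball x r)) ^ q / ENNReal.ofReal r)
          + ENNReal.ofReal (1 + δ) *
            ((ENNReal.ofReal (r ^ (p - (N:ℝ))) * ν (ball x r)) ^ q / ENNReal.ofReal r)) := by
        apply lintegral_mono
        intro r
        dsimp only
        rw [Measure.add_apply, mul_add]
        calc (ENNReal.ofReal (r ^ (p - (N:ℝ))) * μ (ball x r)
              + ENNReal.ofReal (r ^ (p - (N:ℝ))) * ν (ball x r)) ^ q / ENNReal.ofReal r
            ≤ (ENNReal.ofReal C * (ENNReal.ofReal (r ^ (p - (N:ℝ))) * μ (ball x r)) ^ q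
                + ENNReal.ofReal (1 + δ) * (ENNReal.ofReal (r ^ (p - (N:ℝ))) * ν (ball x r)) ^ q)
                / ENNReal.ofReal r := ENNReal.div_le_div_right (hsplit _ _) _
          _ = _ := by rw [ENNReal.add_div, mul_div_assoc, mul_div_assoc]
    _ = _ := by
        rw [lintegral_add_left (by exact (aux_meas N p q μ x).const_mul _),
          lintegral_const_mul' _ _ ENNReal.ofReal_ne_top,
          lintegral_const_mul' _ _ ENNReal.ofReal_ne_top]

/-- Bound on the Wolff potential of a multiple of Lebesgue measure restricted to a set. -/
lemma wolff_smul_vol_le (N : ℕ) (p D : ℝ) (hN : 0 < N) (hp : 1 < p) (hD : 0 < D)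
    (Ω : Set (EuclideanSpace ℝ (Fin N))) (n : ℕ) (x : EuclideanSpace ℝ (Fin N)) :
    wolffPotential N p (2*D) ((n:ℝ≥0∞) • volume.restrict Ω) x ≤
      (n:ℝ≥0∞) ^ (1/(p-1)) * ENNReal.ofReal
        ((volume (ball (0:EuclideanSpace ℝ (Fin N)) 1)).toReal ^ (1/(p-1))
          * (2*D) ^ (1/(p-1)) * (2*D)) := by
  haveI : Nonempty (Fin N) := ⟨⟨0, hN⟩⟩
  have hp1 : (0:ℝ) < p - 1 := by linarith
  set q : ℝ := 1/(p-1) with hqdef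
  have hq : 0 < q := by positivity
  have hpq : p * q - 1 = q := by rw [hqdef]; field_simp; ring
  set vbE := volume (ball (0:EuclideanSpace ℝ (Fin N)) 1) with hvbEdef
  have hvbE_pos : 0 < vbE := measure_ball_pos _ _ one_pos
  have hvbE_ne : vbE ≠ ⊤ := measure_ball_lt_top.ne
  have hvb : vbE = ENNReal.ofReal vbE.toReal := (ENNReal.ofReal_toReal hvbE_ne).symm
  have hvbR : 0 < vbE.toReal := ENNReal.toReal_pos hvbE_pos.ne' hvbE_ne
  unfold wolffPotential
  rw [← hqdef]
  calc (∫⁻ r in Ioo (0:ℝ) (2*D),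
        (ENNReal.ofReal (r ^ (p - (N:ℝ))) * ((n:ℝ≥0∞) • volume.restrict Ω) (ball x r)) ^ q
          / ENNReal.ofReal r)
      ≤ ∫⁻ _ in Ioo (0:ℝ) (2*D),
          ((n:ℝ≥0∞) ^ q * ENNReal.ofReal (vbE.toReal ^ q * (2*D) ^ q)) := by
        apply setLIntegral_mono' measurableSet_Ioo
        intro r hr
        obtain ⟨hr0, hrD⟩ := hr
        have hvol : volume (ball x r) = ENNReal.ofReal (r ^ (N:ℕ)) * vbE := by
          rw [hvbEdef, Measure.addHaar_ball volume x hr0.le, finrank_euclideanSpace_fin]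
        have hball : ((n:ℝ≥0∞) • volume.restrict Ω) (ball x r) ≤
            (n:ℝ≥0∞) * (ENNReal.ofReal (r ^ (N:ℕ)) * vbE) := by
          rw [Measure.smul_apply, smul_eq_mul, ← hvol]
          exact mul_le_mul_right (Measure.restrict_apply_le _ _) _
        have hbase : ENNReal.ofReal (r ^ (p - (N:ℝ))) *
            ((n:ℝ≥0∞) * (ENNReal.ofReal (r ^ (N:ℕ)) * vbE)) =
            (n:ℝ≥0∞) * vbE * ENNReal.ofReal (r ^ p) := by
          rw [show ENNReal.ofReal (r ^ (p - (N:ℝ))) *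
              ((n:ℝ≥0∞) * (ENNReal.ofReal (r ^ (N:ℕ)) * vbE)) =
              (n:ℝ≥0∞) * vbE * (ENNReal.ofReal (r ^ (p - (N:ℝ))) * ENNReal.ofReal (r ^ (N:ℕ)))
            from by ring]
          rw [← ENNReal.ofReal_mul (by positivity), ← Real.rpow_natCast r N,
            ← Real.rpow_add hr0, sub_add_cancel]
        calc (ENNReal.ofReal (r ^ (p - (N:ℝ))) * ((n:ℝ≥0∞) • volume.restrict Ω) (ball x r)) ^ q
              / ENNReal.ofReal r
            ≤ ((n:ℝ≥0∞) * vbE * ENNReal.ofReal (r ^ p)) ^ q / ENNReal.ofReal r := by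
              rw [← hbase]; gcongr
          _ = (n:ℝ≥0∞) ^ q * vbE ^ q * ENNReal.ofReal (r ^ (p * q) / r ^ (1:ℝ)) := by
              rw [ENNReal.mul_rpow_of_nonneg _ _ hq.le, ENNReal.mul_rpow_of_nonneg _ _ hq.le,
                ENNReal.ofReal_rpow_of_pos (Real.rpow_pos_of_pos hr0 p),
                ← Real.rpow_mul hr0.le, mul_div_assoc,
                ENNReal.ofReal_div_of_pos (by rw [Real.rpow_one]; exact hr0), Real.rpow_one]
          _ = (n:ℝ≥0∞) ^ q * vbE ^ q * ENNReal.ofReal (r ^ q) := by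
              rw [← Real.rpow_sub hr0]
              rw [hpq]
          _ ≤ (n:ℝ≥0∞) ^ q * vbE ^ q * ENNReal.ofReal ((2*D) ^ q) := by
              gcongr
          _ = (n:ℝ≥0∞) ^ q * ENNReal.ofReal (vbE.toReal ^ q * (2*D) ^ q) := by
              have hvbq : vbE ^ q = ENNReal.ofReal (vbE.toReal ^ q) := by
                conv_lhs => rw [hvb]
                rw [ENNReal.ofReal_rpow_of_pos hvbR]
              rw [hvbq, mul_assoc, ← ENNReal.ofReal_mul (by positivity)]
    _ = (n:ℝ≥0∞) ^ q * ENNReal.ofReal (vbE.toReal ^ q * (2*D) ^ q * (2*D)) := by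
        rw [setLIntegral_const, Real.volume_Ioo, sub_zero, mul_assoc,
          ← ENNReal.ofReal_mul (by positivity)]

/-- A nonempty open bounded subset of `ℝ^N` (`N ≥ 1`) has positive diameter. -/
lemma diam_pos_of_open (N : ℕ) (hN : 0 < N) (Ω : Set (EuclideanSpace ℝ (Fin N)))
    (hΩo : IsOpen Ω) (hΩc : IsConnected Ω) (hΩb : Bornology.IsBounded Ω) :
    0 < Metric.diam Ω := by
  obtain ⟨x, hx⟩ := hΩc.nonempty
  obtain ⟨r, hr, hball⟩ := Metric.isOpen_iff.mp hΩo x hx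
  set y := x + (r/2) • (EuclideanSpace.single (⟨0, hN⟩ : Fin N) (1:ℝ)) with hy
  have hdist : dist y x = r/2 := by
    rw [hy, dist_eq_norm, add_sub_cancel_left, norm_smul, EuclideanSpace.norm_single]
    simp [abs_of_pos hr]
  have hyΩ : y ∈ Ω := hball (by rw [mem_ball, hdist]; linarith)
  have := Metric.dist_le_diam_of_mem hΩb hyΩ hx
  linarith [hdist ▸ this]

/-- for every `ε > 0` there is `c_ε = c_ε(ε,N,p,β,κ,D) > 0` such that, for
every bounded domain `Ω` of diameter `D`, every finite nonnegative measure `ω` supported in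
`Ω` and every integer `n ≥ 1`,
`(n + κ W_{1,p}^{2D}[n·1_Ω dx + ω](x))^β ≤ c_ε n^{βp/(p−1)} + (1+ε) κ^β W_{1,p}^{2D}[ω](x)^β`
for a.e. `x ∈ Ω`. -/
theorem wolff_plus_lebesgue_pow_le (N : ℕ) (p β κ D : ℝ)
    (hp : 1 < p) (hpN : p < N) (hβ : 1 < β) (hκ : 0 < κ) :
    ∀ ε : ℝ, 0 < ε → ∃ c : ℝ, 0 < c ∧
      ∀ Ω : Set (EuclideanSpace ℝ (Fin N)),
        IsOpen Ω → IsConnected Ω → Bornology.IsBounded Ω → Metric.diam Ω = D →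
        ∀ ω : Measure (EuclideanSpace ℝ (Fin N)), IsFiniteMeasure ω → ω Ωᶜ = 0 →
          ∀ n : ℕ, 1 ≤ n →
            ∀ᵐ x ∂(volume.restrict Ω),
              ((n : ℝ≥0∞) + ENNReal.ofReal κ *
                  wolffPotential N p (2 * D) ((n : ℝ≥0∞) • volume.restrict Ω + ω) x) ^ β
                ≤ ENNReal.ofReal c * (n : ℝ≥0∞) ^ (β * p / (p - 1))
                  + ENNReal.ofReal ((1 + ε) * κ ^ β) *
                      wolffPotential N p (2 * D) ω x ^ β := by
  intro ε hε
  have hN : 0 < N := by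
    have : (1:ℝ) < N := lt_trans hp hpN
    exact_mod_cast lt_trans one_pos this
  have hp1 : (0:ℝ) < p - 1 := by linarith
  set q : ℝ := 1/(p-1) with hqdef
  have hq : 0 < q := by positivity
  -- choice of δ
  have hβ1 : (0:ℝ) < β + 1 := by linarith
  have h1δ : 1 < (1 + ε) ^ (1/(β+1)) :=
    (Real.one_lt_rpow_iff_of_pos (by linarith)).mpr (Or.inl ⟨by linarith, by positivity⟩)
  set δ : ℝ := (1 + ε) ^ (1/(β+1)) - 1 with hδdef
  have hδpos : 0 < δ := by simp only [hδdef]; linarith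
  have hδeq : (1 + δ) ^ (β + 1) = 1 + ε := by
    have h2 : (1:ℝ) + δ = (1 + ε) ^ (1/(β+1)) := by simp [hδdef]
    rw [h2, ← Real.rpow_mul (by linarith), one_div, inv_mul_cancel₀ hβ1.ne', Real.rpow_one]
  obtain ⟨C₁, hC₁, hC₁le⟩ := aux_rpow_split q δ hq hδpos
  obtain ⟨C₂, hC₂, hC₂le⟩ := aux_rpow_split β δ (lt_trans one_pos hβ) hδpos
  rcases le_or_gt D 0 with hD | hD
  · -- vacuous case: no such Ω exists
    refine ⟨1, one_pos, fun Ω hΩo hΩc hΩb hΩd ω _ _ n _ => ?_⟩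
    have := diam_pos_of_open N hN Ω hΩo hΩc hΩb
    rw [hΩd] at this
    linarith
  · -- main case
    set vb : ℝ := (volume (ball (0:EuclideanSpace ℝ (Fin N)) 1)).toReal with hvbdef
    have hvb0 : 0 ≤ vb := ENNReal.toReal_nonneg
    set K₁ : ℝ := vb ^ q * (2*D) ^ q * (2*D) with hK₁def
    have hK₁ : 0 ≤ K₁ := by
      have : (0:ℝ) < 2*D := by linarith
      rw [hK₁def]; positivity
    set s : ℝ := 1 + κ * C₁ * K₁ with hsdef
    have hs : 0 < s := by
      have := mul_nonneg (mul_nonneg hκ.le hC₁.le) hK₁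
      rw [hsdef]; linarith
    refine ⟨C₂ * s ^ β, mul_pos hC₂ (Real.rpow_pos_of_pos hs β),
      fun Ω hΩo hΩc hΩb hΩd ω hωfin hωc n hn => ?_⟩
    refine Filter.Eventually.of_forall (fun x => ?_)
    set W := wolffPotential N p (2*D) ω x with hWdef
    set Wn := wolffPotential N p (2*D) ((n:ℝ≥0∞) • volume.restrict Ω) x with hWndef
    have hn1 : (1:ℝ≥0∞) ≤ (n:ℝ≥0∞) := by exact_mod_cast hn
    have hWsum : wolffPotential N p (2*D) ((n:ℝ≥0∞) • volume.restrict Ω + ω) x ≤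
        ENNReal.ofReal C₁ * Wn + ENNReal.ofReal (1 + δ) * W :=
      wolff_add_le N p (2*D) q C₁ δ hqdef _ ω x hC₁le
    have hWn : Wn ≤ (n:ℝ≥0∞) ^ q * ENNReal.ofReal K₁ :=
      wolff_smul_vol_le N p D hN hp hD Ω n x
    have hκC₁ : (0:ℝ) ≤ κ * C₁ := mul_nonneg hκ.le hC₁.le
    have hκC₁K₁ : (0:ℝ) ≤ κ * C₁ * K₁ := mul_nonneg hκC₁ hK₁
    clear_value q δ vb K₁ s W Wn
    -- step 1: linear bound
    have hstep1 : (n:ℝ≥0∞) + ENNReal.ofReal κ *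
        wolffPotential N p (2*D) ((n:ℝ≥0∞) • volume.restrict Ω + ω) x ≤
        ENNReal.ofReal s * (n:ℝ≥0∞) ^ (1+q) + ENNReal.ofReal (κ*(1+δ)) * W := by
      have e1 : (n:ℝ≥0∞) ≤ (n:ℝ≥0∞) ^ (1+q) := by
        conv_lhs => rw [← ENNReal.rpow_one (n:ℝ≥0∞)]
        exact ENNReal.rpow_le_rpow_of_exponent_le hn1 (by linarith)
      have e2 : (n:ℝ≥0∞) ^ q ≤ (n:ℝ≥0∞) ^ (1+q) :=
        ENNReal.rpow_le_rpow_of_exponent_le hn1 (by linarith)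
      calc (n:ℝ≥0∞) + ENNReal.ofReal κ *
            wolffPotential N p (2*D) ((n:ℝ≥0∞) • volume.restrict Ω + ω) x
          ≤ (n:ℝ≥0∞) + ENNReal.ofReal κ *
              (ENNReal.ofReal C₁ * ((n:ℝ≥0∞) ^ q * ENNReal.ofReal K₁)
                + ENNReal.ofReal (1 + δ) * W) := by
            refine add_le_add_right (mul_le_mul_right (hWsum.trans ?_) _) _
            exact add_le_add_left (mul_le_mul_right hWn _) _
        _ = ((n:ℝ≥0∞) + (ENNReal.ofReal κ * ENNReal.ofReal C₁ * ENNReal.ofReal K₁) * (n:ℝ≥0∞) ^ q)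
              + (ENNReal.ofReal κ * ENNReal.ofReal (1+δ)) * W := by ring
        _ ≤ ((n:ℝ≥0∞) ^ (1+q)
              + (ENNReal.ofReal κ * ENNReal.ofReal C₁ * ENNReal.ofReal K₁) * (n:ℝ≥0∞) ^ (1+q))
              + (ENNReal.ofReal κ * ENNReal.ofReal (1+δ)) * W := by
            exact add_le_add_left (add_le_add e1 (mul_le_mul_right e2 _)) _
        _ = ENNReal.ofReal s * (n:ℝ≥0∞) ^ (1+q) + ENNReal.ofReal (κ*(1+δ)) * W := by
            rw [← ENNReal.ofReal_mul hκ.le, ← ENNReal.ofReal_mul hκC₁,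
              ← ENNReal.ofReal_mul hκ.le, hsdef,
              ENNReal.ofReal_add (by norm_num) hκC₁K₁, ENNReal.ofReal_one]
            ring
    -- step 2: take the power β
    have hβ0 : (0:ℝ) ≤ β := by linarith
    calc ((n:ℝ≥0∞) + ENNReal.ofReal κ *
          wolffPotential N p (2*D) ((n:ℝ≥0∞) • volume.restrict Ω + ω) x) ^ β
        ≤ (ENNReal.ofReal s * (n:ℝ≥0∞) ^ (1+q) + ENNReal.ofReal (κ*(1+δ)) * W) ^ β :=
          ENNReal.rpow_le_rpow hstep1 hβ0
      _ ≤ ENNReal.ofReal C₂ * (ENNReal.ofReal s * (n:ℝ≥0∞) ^ (1+q)) ^ β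
            + ENNReal.ofReal (1 + δ) * (ENNReal.ofReal (κ*(1+δ)) * W) ^ β := hC₂le _ _
      _ = ENNReal.ofReal (C₂ * s ^ β) * (n:ℝ≥0∞) ^ (β * p / (p - 1))
            + ENNReal.ofReal ((1 + ε) * κ ^ β) * W ^ β := by
          have hexp : (1+q) * β = β * p / (p - 1) := by
            rw [hqdef]; field_simp; ring
          have hterm1 : ENNReal.ofReal C₂ * (ENNReal.ofReal s * (n:ℝ≥0∞) ^ (1+q)) ^ β
              = ENNReal.ofReal (C₂ * s ^ β) * (n:ℝ≥0∞) ^ (β * p / (p - 1)) := by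
            rw [ENNReal.mul_rpow_of_nonneg _ _ hβ0, ENNReal.ofReal_rpow_of_pos hs,
              ← mul_assoc, ← ENNReal.ofReal_mul hC₂.le, ← ENNReal.rpow_mul, hexp]
          have hreal : (1+δ) * (κ*(1+δ)) ^ β = (1 + ε) * κ ^ β := by
            rw [Real.mul_rpow hκ.le (by linarith), ← hδeq,
              show β + 1 = 1 + β from by ring,
              Real.rpow_add (by linarith : (0:ℝ) < 1+δ), Real.rpow_one]
            ring
          have hterm2 : ENNReal.ofReal (1 + δ) * (ENNReal.ofReal (κ*(1+δ)) * W) ^ β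
              = ENNReal.ofReal ((1 + ε) * κ ^ β) * W ^ β := by
            rw [ENNReal.mul_rpow_of_nonneg _ _ hβ0,
              ENNReal.ofReal_rpow_of_pos (mul_pos hκ (by linarith)), ← mul_assoc,
              ← ENNReal.ofReal_mul (by linarith : (0:ℝ) ≤ 1 + δ), hreal]
          rw [hterm1, hterm2]
end
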